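/- Let v = (v_i)_{i ∈ nℤ ± I} be a d-face of type (n, I) and let i ∈ nℤ ± I. Suppose that μ_i^v(j) + μ_i^v(j*) = d holds for all j ∈ A_i, or that it holds for all j ∈ B_i. Then μ_i^v is self-dual, i.e. μ_i^v = μ_{−i}^v. -/

import Mathlib

open Finset

namespace FaceComb

/-- Membership of `i` in `nℤ ± I`. -/
def FaceIdx (n : ℕ) (I : Finset ℕ) (i : ℤ) : Prop :=
  ∃ a ∈ I, ∃ b : ℤ, i = (n : ℤ) * b + (a : ℤ) ∨ i = (n : ℤ) * b - (a : ℤ)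

/-- The vector `ω_i ∈ ℤ^n`: writing `i = b·n + c` with `0 ≤ c < n`, the first `c`
entries are `-b-1` and the rest are `-b`. -/
def omegaVec (n : ℕ) (i : ℤ) (j : Fin n) : ℤ :=
  if ((j : ℕ) : ℤ) < i % (n : ℤ) then -(i / (n : ℤ)) - 1 else -(i / (n : ℤ))

/-- `v` is a `d`-face of type `(n, I)` (conditions imposed for indices in `nℤ ± I`). -/
structure IsFace (n : ℕ) (I : Finset ℕ) (d : ℤ) (v : ℤ → Fin n → ℤ) : Prop where
  per : ∀ i, FaceIdx n I i → ∀ j, v (i + (n : ℤ)) j = v i j - 1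
  mono : ∀ i i', FaceIdx n I i → FaceIdx n I i' → i ≤ i' → ∀ j, v i' j ≤ v i j
  sumEq : ∀ i i', FaceIdx n I i → FaceIdx n I i' → (∑ j, v i j) - (∑ j, v i' j) = i' - i
  dual : ∀ i, FaceIdx n I i → ∀ j, v i j + v (-i) j.rev = d

/-- `μ_i^v := v_i − ω_i`. -/
def muFace (n : ℕ) (v : ℤ → Fin n → ℤ) (i : ℤ) (j : Fin n) : ℤ :=
  v i j - omegaVec n i j

/-- `j ∈ A_a`, i.e. (1-indexed) `j ∈ {1,…,a} ∪ {n+1−a,…,n}`. -/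
def memA (n a : ℕ) (j : Fin n) : Prop := (j : ℕ) < a ∨ n - a ≤ (j : ℕ)

/-- `j ∈ B_a`, i.e. (1-indexed) `j ∈ {a+1,…,n−a}`. -/
def memB (n a : ℕ) (j : Fin n) : Prop := a ≤ (j : ℕ) ∧ (j : ℕ) < n - a

lemma faceIdx_add {n : ℕ} {I : Finset ℕ} {i : ℤ} (hi : FaceIdx n I i) (k : ℤ) :
    FaceIdx n I (i + n * k) := by
  obtain ⟨a, ha, b, hb | hb⟩ := hi
  · exact ⟨a, ha, b + k, Or.inl (by rw [hb]; ring)⟩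
  · exact ⟨a, ha, b + k, Or.inr (by rw [hb]; ring)⟩

lemma faceIdx_neg {n : ℕ} {I : Finset ℕ} {i : ℤ} (hi : FaceIdx n I i) :
    FaceIdx n I (-i) := by
  obtain ⟨a, ha, b, hb | hb⟩ := hi
  · exact ⟨a, ha, -b, Or.inr (by rw [hb]; ring)⟩
  · exact ⟨a, ha, -b, Or.inl (by rw [hb]; ring)⟩

lemma omega_shift (n : ℕ) (hn : 0 < n) (i : ℤ) (j : Fin n) :
    omegaVec n (i + n) j = omegaVec n i j - 1 := by
  have hn0 : ((n:ℤ)) ≠ 0 := by positivity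
  have hm : (i + (n:ℤ)) % n = i % n := by
    have := Int.add_mul_emod_self_left (a := i) (b := (n:ℤ)) (c := 1)
    simpa using this
  have hd : (i + (n:ℤ)) / n = i / n + 1 := by
    have := Int.add_mul_ediv_left i 1 hn0
    simpa using this
  simp only [omegaVec, hm, hd]
  split <;> ring

lemma mu_shift {n : ℕ} {I : Finset ℕ} {d : ℤ} {v : ℤ → Fin n → ℤ} (hn : 0 < n)
    (hv : IsFace n I d v) {i : ℤ} (hi : FaceIdx n I i) (j : Fin n) :
    muFace n v (i + n) j = muFace n v i j := by
  simp only [muFace, hv.per i hi j, omega_shift n hn i j]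
  ring

lemma mu_congr {n : ℕ} {I : Finset ℕ} {d : ℤ} {v : ℤ → Fin n → ℤ} (hn : 0 < n)
    (hv : IsFace n I d v) {i : ℤ} (hi : FaceIdx n I i) (k : ℤ) (j : Fin n) :
    muFace n v (i + n * k) j = muFace n v i j := by
  induction k using Int.induction_on with
  | zero => simp
  | succ m ih =>
      have h1 : i + n * ((m : ℤ) + 1) = (i + n * m) + n := by ring
      rw [h1, mu_shift hn hv (faceIdx_add hi m) j, ih]
  | pred m ih =>
      have h1 : i + n * (-(m : ℤ)) = (i + n * (-(m:ℤ) - 1)) + n := by ring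
      rw [h1] at ih
      rw [← ih, mu_shift hn hv (faceIdx_add hi (-(m:ℤ) - 1)) j]

lemma mu_eq_of_dvd {n : ℕ} {I : Finset ℕ} {d : ℤ} {v : ℤ → Fin n → ℤ} (hn : 0 < n)
    (hv : IsFace n I d v) {i i' : ℤ} (hi : FaceIdx n I i) (hdvd : (n : ℤ) ∣ i' - i)
    (j : Fin n) : muFace n v i' j = muFace n v i j := by
  obtain ⟨k, hk⟩ := hdvd
  have : i' = i + n * k := by linarith
  rw [this]; exact mu_congr hn hv hi k j

lemma val_rev_int {n : ℕ} (j : Fin n) : ((j.rev : ℕ) : ℤ) = (n : ℤ) - 1 - (j : ℕ) := by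
  have hj := j.is_lt
  have : (j.rev : ℕ) = n - (j + 1) := Fin.val_rev j
  omega

lemma omega_dual (n : ℕ) (hn : 0 < n) (i : ℤ) (j : Fin n) :
    omegaVec n i j + omegaVec n (-i) j.rev = 0 := by
  have hn' : (0:ℤ) < n := by exact_mod_cast hn
  have h1 := Int.emod_add_mul_ediv i n
  have h2 := Int.emod_add_mul_ediv (-i) n
  have hr1 : 0 ≤ i % n := Int.emod_nonneg i (ne_of_gt hn')
  have hr1' : i % n < n := Int.emod_lt_of_pos i hn'
  have hr2 : 0 ≤ (-i) % n := Int.emod_nonneg (-i) (ne_of_gt hn')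
  have hr2' : (-i) % n < n := Int.emod_lt_of_pos (-i) hn'
  set q := i / (n:ℤ) with hq
  set r := i % (n:ℤ) with hr
  set q2 := (-i) / (n:ℤ) with hq2
  set r2 := (-i) % (n:ℤ) with hr2def
  have hsum : (n:ℤ) * (q + q2) = -(r + r2) := by linarith
  have hcases : q + q2 = 0 ∨ q + q2 = -1 := by
    rcases lt_trichotomy (q + q2) (-1) with hlt | heq | hgt
    · exfalso
      have : (n:ℤ) * (q + q2) ≤ n * (-2) := by
        apply mul_le_mul_of_nonneg_left (by omega) (le_of_lt hn')
      linarith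
    · exact Or.inr heq
    · left
      have h0 : 0 ≤ q + q2 := by omega
      rcases eq_or_lt_of_le h0 with he | hl
      · omega
      · exfalso
        have : (n:ℤ) * 1 ≤ n * (q + q2) :=
          mul_le_mul_of_nonneg_left (by omega) (le_of_lt hn')
        linarith
  have hrev := val_rev_int j
  have hjlt := j.is_lt
  have hjlt' : ((j:ℕ):ℤ) < n := by exact_mod_cast hjlt
  have hjnn : (0:ℤ) ≤ ((j:ℕ):ℤ) := Int.natCast_nonneg _
  rcases hcases with hc | hc
  · have hr0 : r = 0 ∧ r2 = 0 := by constructor <;> nlinarith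
    simp only [omegaVec, ← hq, ← hr, ← hq2, ← hr2def, hr0.1, hr0.2]
    rw [if_neg (by omega), if_neg (by omega)]
    linarith
  · have hr2v : r2 = n - r := by nlinarith
    simp only [omegaVec, ← hq, ← hr, ← hq2, ← hr2def, hr2v, hrev]
    by_cases hcond : ((j:ℕ):ℤ) < r
    · rw [if_pos hcond, if_neg (by omega)]; linarith
    · rw [if_neg hcond, if_pos (by omega)]; linarith

lemma sum_ind_range (n m : ℕ) :
    (∑ j ∈ Finset.range n, (if ((j:ℕ):ℤ) < (m:ℤ) then (1:ℤ) else 0)) = (min m n : ℕ) := by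
  induction n with
  | zero => simp
  | succ k ih =>
      rw [Finset.sum_range_succ, ih]
      split
      · next h => have : k < m := by exact_mod_cast h
                  push_cast; omega
      · next h => have : ¬ k < m := fun hh => h (by exact_mod_cast hh)
                  push_cast; omega

lemma sum_ite_fin (n m : ℕ) (hm : m ≤ n) (a b : ℤ) :
    (∑ j : Fin n, (if ((j:ℕ):ℤ) < (m:ℤ) then a else b)) = m * a + ((n:ℤ) - m) * b := by
  have key : ∀ j : ℕ, (if ((j:ℕ):ℤ) < (m:ℤ) then a else b)
      = b + (if ((j:ℕ):ℤ) < (m:ℤ) then (1:ℤ) else 0) * (a - b) := by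
    intro j; split <;> ring
  rw [Fin.sum_univ_eq_sum_range (fun j => if ((j:ℕ):ℤ) < (m:ℤ) then a else b)]
  calc (∑ j ∈ Finset.range n, (if ((j:ℕ):ℤ) < (m:ℤ) then a else b))
      = ∑ j ∈ Finset.range n, (b + (if ((j:ℕ):ℤ) < (m:ℤ) then (1:ℤ) else 0) * (a - b)) := by
        exact Finset.sum_congr rfl (fun j _ => key j)
    _ = n * b + (∑ j ∈ Finset.range n, (if ((j:ℕ):ℤ) < (m:ℤ) then (1:ℤ) else 0)) * (a - b) := by
        rw [Finset.sum_add_distrib, ← Finset.sum_mul, Finset.sum_const, Finset.card_range]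
        push_cast; ring
    _ = m * a + ((n:ℤ) - m) * b := by
        rw [sum_ind_range n m, min_eq_left hm]; ring

lemma muA {n : ℕ} {I : Finset ℕ} {d : ℤ} {v : ℤ → Fin n → ℤ} (hn : 0 < n)
    (hv : IsFace n I d v) {i : ℤ} (hi : FaceIdx n I i) (j : Fin n) :
    muFace n v i j + muFace n v (-i) j.rev = d := by
  have h1 := hv.dual i hi j
  have h2 := omega_dual n hn i j
  simp only [muFace]
  linarith

lemma key {n : ℕ} {I : Finset ℕ} {d : ℤ} {v : ℤ → Fin n → ℤ} (hn : 0 < n)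
    (hv : IsFace n I d v) (i' : ℕ) (hle : i' ≤ n / 2) (hf : FaceIdx n I (i' : ℤ))
    (h0 : (∀ j, memA n i' j → muFace n v (i' : ℤ) j = muFace n v (-(i' : ℤ)) j) ∨
          (∀ j, memB n i' j → muFace n v (i' : ℤ) j = muFace n v (-(i' : ℤ)) j)) :
    ∀ j, muFace n v (i' : ℤ) j = muFace n v (-(i' : ℤ)) j := by
  classical
  rcases Nat.eq_zero_or_pos i' with hz | hpos
  · subst hz; intro j; norm_num
  -- setup
  set c : ℤ := (i' : ℤ) with hc
  have hc1 : 1 ≤ c := by omega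
  have hc2 : 2 * c ≤ (n : ℤ) := by omega
  have hcn : c < (n : ℤ) := by linarith
  have hn0 : ((n : ℤ)) ≠ 0 := by positivity
  -- div/mod facts
  have hm1 : c % (n:ℤ) = c := Int.emod_eq_of_lt (by linarith) hcn
  have hd1 : c / (n:ℤ) = 0 := Int.ediv_eq_zero_of_lt (by linarith) hcn
  have hm3 : ((n:ℤ) - c) % n = (n:ℤ) - c := Int.emod_eq_of_lt (by linarith) (by linarith)
  have hd3 : ((n:ℤ) - c) / n = 0 := Int.ediv_eq_zero_of_lt (by linarith) (by linarith)
  have hrw : -c = ((n:ℤ) - c) + (n:ℤ) * (-1) := by ring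
  have hm2 : (-c) % (n:ℤ) = (n:ℤ) - c := by
    rw [hrw, Int.add_mul_emod_self_left, hm3]
  have hd2 : (-c) / (n:ℤ) = -1 := by
    rw [hrw, Int.add_mul_ediv_left _ _ hn0, hd3]
    norm_num
  -- omega vectors explicitly
  have hω1 : ∀ j : Fin n, omegaVec n c j = if ((j:ℕ):ℤ) < c then -1 else 0 := by
    intro j; simp [omegaVec, hm1, hd1]
  have hω2 : ∀ j : Fin n, omegaVec n (-c) j = if ((j:ℕ):ℤ) < (n:ℤ) - c then 0 else 1 := by
    intro j; simp [omegaVec, hm2, hd2]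
  have hω3 : ∀ j : Fin n, omegaVec n ((n:ℤ) - c) j = if ((j:ℕ):ℤ) < (n:ℤ) - c then -1 else 0 := by
    intro j; simp [omegaVec, hm3, hd3]
  -- face indices
  have hfneg : FaceIdx n I (-c) := faceIdx_neg hf
  have hfn : FaceIdx n I ((n:ℤ) - c) := by
    have := faceIdx_add hfneg 1
    rwa [show -c + (n:ℤ) * 1 = (n:ℤ) - c by ring] at this
  have hme : ∀ j : Fin n, muFace n v ((n:ℤ) - c) j = muFace n v (-c) j := by
    intro j
    have := mu_shift hn hv hfneg j
    rwa [show -c + (n:ℤ) = (n:ℤ) - c by ring] at this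
  -- monotonicity
  have hub : ∀ j, v c j ≤ v (-c) j := hv.mono (-c) c hfneg hf (by linarith)
  have hlb : ∀ j, v ((n:ℤ) - c) j ≤ v c j := hv.mono c ((n:ℤ) - c) hf hfn (by linarith)
  set δ : Fin n → ℤ := fun j => muFace n v c j - muFace n v (-c) j with hδ
  have hup : ∀ j, δ j = (v c j - v (-c) j) - omegaVec n c j + omegaVec n (-c) j := by
    intro j; simp only [hδ, muFace]; ring
  have hdn : ∀ j, δ j = (v c j - v ((n:ℤ) - c) j) - omegaVec n c j + omegaVec n ((n:ℤ) - c) j := by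
    intro j
    have h := hme j
    simp only [muFace] at h
    simp only [hδ, muFace]
    linarith
  have hjle : ∀ j : Fin n, ((j:ℕ):ℤ) < (n:ℤ) := by
    intro j; exact_mod_cast j.is_lt
  have hjnn : ∀ j : Fin n, (0:ℤ) ≤ ((j:ℕ):ℤ) := fun j => Int.natCast_nonneg _
  -- bounds
  have hA_bound : ∀ j : Fin n, memA n i' j → 0 ≤ δ j ∧ δ j ≤ 1 := by
    intro j hA
    have hA' : ((j:ℕ):ℤ) < c ∨ (n:ℤ) - c ≤ ((j:ℕ):ℤ) := by
      simp only [memA] at hA; omega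
    constructor
    · rw [hdn j, hω1 j, hω3 j]
      rcases hA' with hlt | hge
      · rw [if_pos hlt, if_pos (by linarith)]; linarith [hlb j]
      · rw [if_neg (by linarith), if_neg (by linarith)]; linarith [hlb j]
    · rw [hup j, hω1 j, hω2 j]
      rcases hA' with hlt | hge
      · rw [if_pos hlt, if_pos (by linarith)]; linarith [hub j]
      · rw [if_neg (by linarith), if_neg (by linarith)]; linarith [hub j]
  have hB_bound : ∀ j : Fin n, memB n i' j → -1 ≤ δ j ∧ δ j ≤ 0 := by
    intro j hB
    have hB' : c ≤ ((j:ℕ):ℤ) ∧ ((j:ℕ):ℤ) < (n:ℤ) - c := by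
      simp only [memB] at hB; omega
    constructor
    · rw [hdn j, hω1 j, hω3 j, if_neg (by linarith), if_pos (by linarith)]
      linarith [hlb j]
    · rw [hup j, hω1 j, hω2 j, if_neg (by linarith), if_pos (by linarith)]
      linarith [hub j]
  -- sum is zero
  have hs1 : (∑ j, v c j) - (∑ j, v (-c) j) = -c - c := hv.sumEq c (-c) hf hfneg
  have hw1 : (∑ j, omegaVec n c j) = -c := by
    rw [Finset.sum_congr rfl (fun j _ => hω1 j)]
    rw [sum_ite_fin n i' (by omega) (-1) 0]
    rw [← hc]; ring
  have hw2 : (∑ j, omegaVec n (-c) j) = c := by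
    rw [Finset.sum_congr rfl (fun j _ => hω2 j)]
    have hcast : ((n - i' : ℕ) : ℤ) = (n:ℤ) - c := by
      rw [hc]; omega
    rw [show (∑ j : Fin n, if ((j:ℕ):ℤ) < (n:ℤ) - c then (0:ℤ) else 1)
        = ∑ j : Fin n, if ((j:ℕ):ℤ) < ((n - i' : ℕ):ℤ) then (0:ℤ) else 1 by
      rw [hcast]]
    rw [sum_ite_fin n (n - i') (by omega) 0 1, hcast]
    ring
  have hsum0 : (∑ j, δ j) = 0 := by
    simp only [hδ, muFace, Finset.sum_sub_distrib]
    linarith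
  -- conclude
  set P : Fin n → Prop := fun j => (j:ℕ) < i' ∨ n - i' ≤ (j:ℕ) with hP
  have hPA : ∀ j, P j ↔ memA n i' j := fun j => Iff.rfl
  have hPB : ∀ j, ¬ P j ↔ memB n i' j := by
    intro j; simp only [hP, memB]; omega
  have hsplit := Finset.sum_filter_add_sum_filter_not Finset.univ P δ
  rcases h0 with hA | hB
  · have h1 : (∑ j ∈ Finset.univ.filter P, δ j) = 0 :=
      Finset.sum_eq_zero (fun j hj => by
        have := hA j ((hPA j).1 (Finset.mem_filter.1 hj).2)
        simp only [hδ]; omega)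
    have h2 : (∑ j ∈ Finset.univ.filter (fun j => ¬ P j), δ j) = 0 := by
      rw [hsum0] at hsplit; linarith
    have h3 := (Finset.sum_eq_zero_iff_of_nonpos (fun j hj =>
      (hB_bound j ((hPB j).1 (Finset.mem_filter.1 hj).2)).2)).1 h2
    intro j
    by_cases hj : P j
    · exact hA j ((hPA j).1 hj)
    · have := h3 j (Finset.mem_filter.2 ⟨Finset.mem_univ _, hj⟩)
      simp only [hδ] at this; omega
  · have h2 : (∑ j ∈ Finset.univ.filter (fun j => ¬ P j), δ j) = 0 :=
      Finset.sum_eq_zero (fun j hj => by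
        have := hB j ((hPB j).1 (Finset.mem_filter.1 hj).2)
        simp only [hδ]; omega)
    have h1 : (∑ j ∈ Finset.univ.filter P, δ j) = 0 := by
      rw [hsum0] at hsplit; linarith
    have h3 := (Finset.sum_eq_zero_iff_of_nonneg (fun j hj =>
      (hA_bound j ((hPA j).1 (Finset.mem_filter.1 hj).2)).1)).1 h1
    intro j
    by_cases hj : P j
    · have := h3 j (Finset.mem_filter.2 ⟨Finset.mem_univ _, hj⟩)
      simp only [hδ] at this; omega
    · exact hB j ((hPB j).1 hj)

theorem statement1 (n : ℕ) (hn : 0 < n) (I : Finset ℕ) (hI : I.Nonempty)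
    (hIle : ∀ a ∈ I, a ≤ n / 2) (d : ℤ) (v : ℤ → Fin n → ℤ) (hv : IsFace n I d v)
    (i : ℤ) (hi : FaceIdx n I i)
    (i' : ℕ) (hi'le : i' ≤ n / 2) (hcong : (n : ℤ) ∣ i - (i' : ℤ) ∨ (n : ℤ) ∣ i + (i' : ℤ))
    (h : (∀ j : Fin n, memA n i' j → muFace n v i j + muFace n v i j.rev = d) ∨
        (∀ j : Fin n, memB n i' j → muFace n v i j + muFace n v i j.rev = d)) :
    ∀ j, muFace n v i j = muFace n v (-i) j := by

  have hn0 : ((n:ℤ)) ≠ 0 := by positivity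
  have step : ∀ j : Fin n, muFace n v i j + muFace n v i j.rev = d →
      muFace n v i j = muFace n v (-i) j := by
    intro j hj
    have h1 := muA hn hv hi j.rev
    rw [Fin.rev_rev] at h1
    linarith
  have hEq : (∀ j, memA n i' j → muFace n v i j = muFace n v (-i) j) ∨
      (∀ j, memB n i' j → muFace n v i j = muFace n v (-i) j) := by
    rcases h with h | h
    · exact Or.inl (fun j hj => step j (h j hj))
    · exact Or.inr (fun j hj => step j (h j hj))
  rcases hcong with hd1 | hd2
  · obtain ⟨k, hk⟩ := hd1
    have hfi' : FaceIdx n I (i' : ℤ) := by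
      have := faceIdx_add hi (-k)
      rwa [show i + (n:ℤ) * (-k) = (i' : ℤ) by linarith] at this
    have e1 : ∀ j, muFace n v (i' : ℤ) j = muFace n v i j :=
      mu_eq_of_dvd hn hv hi ⟨-k, by linarith⟩
    have e2 : ∀ j, muFace n v (-(i' : ℤ)) j = muFace n v (-i) j :=
      mu_eq_of_dvd hn hv (faceIdx_neg hi) ⟨k, by linarith⟩
    have hk0 : ∀ j, muFace n v (i' : ℤ) j = muFace n v (-(i' : ℤ)) j := by
      apply key hn hv i' hi'le hfi'
      rcases hEq with hA | hB
      · exact Or.inl (fun j hj => by rw [e1 j, e2 j]; exact hA j hj)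
      · exact Or.inr (fun j hj => by rw [e1 j, e2 j]; exact hB j hj)
    intro j
    rw [← e1 j, ← e2 j]
    exact hk0 j
  · obtain ⟨k, hk⟩ := hd2
    have hfi' : FaceIdx n I (i' : ℤ) := by
      have := faceIdx_add (faceIdx_neg hi) k
      rwa [show -i + (n:ℤ) * k = (i' : ℤ) by linarith] at this
    have e1 : ∀ j, muFace n v (-(i' : ℤ)) j = muFace n v i j :=
      mu_eq_of_dvd hn hv hi ⟨-k, by linarith⟩
    have e2 : ∀ j, muFace n v (i' : ℤ) j = muFace n v (-i) j :=
      mu_eq_of_dvd hn hv (faceIdx_neg hi) ⟨k, by linarith⟩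
    have hk0 : ∀ j, muFace n v (i' : ℤ) j = muFace n v (-(i' : ℤ)) j := by
      apply key hn hv i' hi'le hfi'
      rcases hEq with hA | hB
      · exact Or.inl (fun j hj => by rw [e1 j, e2 j]; exact (hA j hj).symm)
      · exact Or.inr (fun j hj => by rw [e1 j, e2 j]; exact (hB j hj).symm)
    intro j
    rw [← e1 j, ← e2 j]
    exact (hk0 j).symm


end FaceComb
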